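/- Let K be a number field and U a torsion-free subgroup of the unit group (𝓞 K)ˣ. Form the semidirect product G = 𝓞 K ⋊ U, where the normal factor is the additive group of 𝓞 K and u ∈ U acts by multiplication by u. Then every group homomorphism f : G → U is trivial on the normal factor, i.e. f(ι(a)) = 1 for every a ∈ 𝓞 K, where ι : 𝓞 K → G is the canonical inclusion of the normal factor. -/

import Mathlib

open NumberField SemidirectProduct

/-- The action of a subgroup `U ≤ (𝓞 K)ˣ` on the additive group of `𝓞 K`
(written multiplicatively), where `u ∈ U` acts by multiplication by `u`. -/
noncomputable def otAction (K : Type*) [Field K] [NumberField K] (U : Subgroup (𝓞 K)ˣ) :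
    U →* MulAut (Multiplicative (𝓞 K)) where
  toFun u := AddEquiv.toMultiplicative (AddAut.mulLeft (u : (𝓞 K)ˣ))
  map_one' := by ext x; simp; rfl
  map_mul' u v := by ext x; simp [mul_assoc]; rfl

/-- A monoid is torsion-free if no nontrivial element has finite order
(the Mathlib definition of December 2024, since removed). -/
def Monoid.IsTorsionFree (G : Type*) [Monoid G] : Prop :=
  ∀ g : G, g ≠ 1 → ¬IsOfFinOrder g

/-- For a number field `K` and a torsion-free subgroup
`U ≤ (𝓞 K)ˣ`, every group homomorphism `𝓞 K ⋊ U → U` is trivial on the normal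
factor `𝓞 K`. -/
theorem stmt1 (K : Type*) [Field K] [NumberField K] (U : Subgroup (𝓞 K)ˣ)
    (hU : Monoid.IsTorsionFree U)
    (f : (Multiplicative (𝓞 K) ⋊[otAction K U] U) →* U) (a : 𝓞 K) :
    f (SemidirectProduct.inl (Multiplicative.ofAdd a)) = 1 := by
  set φ : Multiplicative (𝓞 K) →* U := f.comp SemidirectProduct.inl with hφ
  show φ (Multiplicative.ofAdd a) = 1
  by_cases htriv : ∀ u : U, u = 1
  · exact htriv _
  push_neg at htriv
  obtain ⟨u, hu⟩ := htriv
  set c : 𝓞 K := ((u : (𝓞 K)ˣ) : 𝓞 K) with hc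
  -- conjugation invariance
  have h1 : ∀ x : 𝓞 K, φ (Multiplicative.ofAdd (c * x)) = φ (Multiplicative.ofAdd x) := by
    intro x
    have key : (SemidirectProduct.inl (Multiplicative.ofAdd (c * x)) :
        Multiplicative (𝓞 K) ⋊[otAction K U] U) =
        SemidirectProduct.inr u * SemidirectProduct.inl (Multiplicative.ofAdd x) *
          SemidirectProduct.inr u⁻¹ := by
      rw [← SemidirectProduct.inl_aut (φ := otAction K U) u (Multiplicative.ofAdd x)]
      rfl
    have := congrArg f key
    simp only [map_mul, map_inv] at this
    rw [hφ]
    simp only [MonoidHom.comp_apply]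
    rw [this, mul_comm (f (SemidirectProduct.inr u)), mul_assoc, mul_inv_cancel, mul_one]
  -- therefore φ kills multiples of (c - 1)
  have h2 : ∀ x : 𝓞 K, φ (Multiplicative.ofAdd ((c - 1) * x)) = 1 := by
    intro x
    have : (c - 1) * x = c * x - x := by ring
    rw [this, ofAdd_sub, map_div, h1, div_self']
  -- c - 1 ≠ 0
  have hc1 : c - 1 ≠ 0 := by
    intro h
    apply hu
    have hce : c = 1 := by linear_combination h
    apply Subtype.ext
    apply Units.ext
    simp only [OneMemClass.coe_one, Units.val_one]
    exact hce
  -- c - 1 divides a positive integer n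
  set n : ℕ := Ideal.absNorm (Ideal.span {c - 1}) with hn
  have hdvd : (c - 1) ∣ (n : 𝓞 K) := by
    rw [← Ideal.mem_span_singleton]
    exact Ideal.absNorm_mem _
  have hnpos : 0 < n := by
    rw [hn, Ideal.absNorm_span_singleton]
    rw [Int.natAbs_pos]
    exact Algebra.norm_ne_zero_iff.mpr hc1
  obtain ⟨b, hb⟩ := hdvd
  -- φ(a)^n = 1
  have hpow : φ (Multiplicative.ofAdd a) ^ n = 1 := by
    have : (n : 𝓞 K) * a = (c - 1) * (b * a) := by rw [hb]; ring
    have h3 := h2 (b * a)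
    rw [← this] at h3
    have : Multiplicative.ofAdd ((n : 𝓞 K) * a) = Multiplicative.ofAdd a ^ n := by
      rw [← nsmul_eq_mul, ofAdd_nsmul]
    rw [this, map_pow] at h3
    exact h3
  by_contra hne
  exact hU _ hne (isOfFinOrder_iff_pow_eq_one.mpr ⟨n, hnpos, hpow⟩)
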